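/- Let G be a graph on a finite vertex set V with |V| ≥ 4, and let x, y, z, w be four distinct vertices of G. If the induced subgraphs of G on {x,y,w} and on {x,y,z} are both disconnected, and the induced subgraph of G on {y,z,w} is connected or the induced subgraph of G on {x,z,w} is connected, then x and y are not adjacent in G. -/

import Mathlib

lemma aux_conn {V : Type*} (G : SimpleGraph V) {a b c : V}
    (hab : G.Adj a b) (hac : G.Adj a c) :
    (G.induce ({a, b, c} : Set V)).Connected := by
  rw [SimpleGraph.connected_iff]
  refine ⟨?_, ⟨⟨a, by simp⟩⟩⟩
  have key : ∀ u : ({a, b, c} : Set V),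
      (G.induce ({a, b, c} : Set V)).Reachable ⟨a, by simp⟩ u := by
    rintro ⟨u, hu⟩
    rcases hu with h | h | h
    · subst h; exact SimpleGraph.Reachable.refl _
    · subst h
      exact SimpleGraph.Adj.reachable (by exact hab)
    · subst h
      exact SimpleGraph.Adj.reachable (by exact hac)
  intro u v
  exact (key u).symm.trans (key v)

lemma aux_edge {V : Type*} (G : SimpleGraph V) {a b c : V} (hab : a ≠ b)
    (h : (G.induce ({a, b, c} : Set V)).Connected) :
    G.Adj a b ∨ G.Adj a c := by
  obtain ⟨p⟩ := h.preconnected ⟨a, by simp⟩ ⟨b, by simp⟩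
  have hnil : ¬ p.Nil := by
    intro hn
    exact hab (congrArg Subtype.val (SimpleGraph.Walk.Nil.eq hn))
  have hadj : (G.induce _).Adj _ (p.getVert 1) := p.adj_snd hnil
  rcases hu : p.getVert 1 with ⟨v, hv⟩
  rw [hu] at hadj
  rcases hv with h' | h' | h'
  · subst h'
    exact absurd hadj (G.induce _).irrefl
  · subst h'
    exact Or.inl (by exact hadj)
  · subst h'
    exact Or.inr (by exact hadj)

/-- Key lemma (i): if `G[{x,y,w}]` and `G[{x,y,z}]` are disconnected while
`G[{y,z,w}]` or `G[{x,z,w}]` is connected, then `x ≁ y`. -/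
theorem stmt_5 {V : Type*} [Fintype V] [DecidableEq V] (G : SimpleGraph V)
    (hn : 4 ≤ Fintype.card V) (x y z w : V)
    (hxy : x ≠ y) (hxz : x ≠ z) (hxw : x ≠ w) (hyz : y ≠ z) (hyw : y ≠ w) (hzw : z ≠ w)
    (h1 : ¬ (G.induce ({x, y, w} : Set V)).Connected)
    (h2 : ¬ (G.induce ({x, y, z} : Set V)).Connected)
    (h3 : (G.induce ({y, z, w} : Set V)).Connected ∨
          (G.induce ({x, z, w} : Set V)).Connected) :
    ¬ G.Adj x y := by
  intro hadj
  have hset1 : ({y, x, w} : Set V) = {x, y, w} := by ext u; simp; tauto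
  have hset2 : ({y, x, z} : Set V) = {x, y, z} := by ext u; simp; tauto
  have hxw' : ¬ G.Adj x w := fun h => h1 (aux_conn G hadj h)
  have hyw' : ¬ G.Adj y w := fun h => h1 (by
    have := aux_conn G hadj.symm h
    rwa [hset1] at this)
  have hxz' : ¬ G.Adj x z := fun h => h2 (aux_conn G hadj h)
  have hyz' : ¬ G.Adj y z := fun h => h2 (by
    have := aux_conn G hadj.symm h
    rwa [hset2] at this)
  rcases h3 with h | h
  · rcases aux_edge G hyz h with h' | h'
    · exact hyz' h'
    · exact hyw' h'
  · rcases aux_edge G hxz h with h' | h'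
    · exact hxz' h'
    · exact hxw' h'
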